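/- Let (A⊗V,μ_{A⊗V}) be a weak crossed product with preunit ν, and let A×V, p_{A⊗V}, i_{A⊗V} be a splitting of the idempotent ∇_{A⊗V}. Then A×V is a monoid with product μ_{A×V}=p_{A⊗V}∘μ_{A⊗V}∘(i_{A⊗V}⊗i_{A⊗V}) and unit η_{A×V}=p_{A⊗V}∘ν. -/

import Mathlib

open CategoryTheory MonoidalCategory

universe v u

namespace WeakCrossed

variable {C : Type u} [Category.{v} C] [MonoidalCategory C]

/-- The monoid axioms for a triple `(A, η, μ)` in a monoidal category. -/
def IsMon (A : C) (eta : 𝟙_ C ⟶ A) (mu : A ⊗ A ⟶ A) : Prop :=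
  (eta ▷ A) ≫ mu = (λ_ A).hom ∧ (A ◁ eta) ≫ mu = (ρ_ A).hom ∧
    (mu ▷ A) ≫ mu = (α_ A A A).hom ≫ (A ◁ mu) ≫ mu

/-- The morphism `(μ_A ⊗ Y) ∘ (A ⊗ f) : (A ⊗ X) ⊗ Z ⟶ A ⊗ Y` for `f : X ⊗ Z ⟶ A ⊗ Y`. -/
def phi (A : C) {X Z Y : C} (mu : A ⊗ A ⟶ A) (f : X ⊗ Z ⟶ A ⊗ Y) :
    (A ⊗ X) ⊗ Z ⟶ A ⊗ Y :=
  (α_ A X Z).hom ≫ (A ◁ f) ≫ (α_ A A Y).inv ≫ (mu ▷ Y)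

/-- The measuring condition `(μ_A ⊗ V) ∘ (A ⊗ ψ) ∘ (ψ ⊗ A) = ψ ∘ (V ⊗ μ_A)`. -/
def Measuring (A V : C) (mu : A ⊗ A ⟶ A) (psi : V ⊗ A ⟶ A ⊗ V) : Prop :=
  (psi ▷ A) ≫ phi A mu psi = (α_ V A A).hom ≫ (V ◁ mu) ≫ psi

/-- The idempotent `∇_{A⊗V} = (μ_A ⊗ V) ∘ (A ⊗ ψ) ∘ (A ⊗ V ⊗ η_A)`. -/
def nabla (A V : C) (eta : 𝟙_ C ⟶ A) (mu : A ⊗ A ⟶ A) (psi : V ⊗ A ⟶ A ⊗ V) :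
    A ⊗ V ⟶ A ⊗ V :=
  (ρ_ (A ⊗ V)).inv ≫ ((A ⊗ V) ◁ eta) ≫ phi A mu psi

/-- The twisted condition
`(μ_A ⊗ V) ∘ (A ⊗ ψ) ∘ (σ ⊗ A) = (μ_A ⊗ V) ∘ (A ⊗ σ) ∘ (ψ ⊗ V) ∘ (V ⊗ ψ)`. -/
def Twisted (A V : C) (mu : A ⊗ A ⟶ A) (psi : V ⊗ A ⟶ A ⊗ V)
    (sig : V ⊗ V ⟶ A ⊗ V) : Prop :=
  (sig ▷ A) ≫ phi A mu psi =
    (α_ V V A).hom ≫ (V ◁ psi) ≫ (α_ V A V).inv ≫ (psi ▷ V) ≫ phi A mu sig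

/-- The cocycle condition
`(μ_A ⊗ V) ∘ (A ⊗ σ) ∘ (σ ⊗ V) = (μ_A ⊗ V) ∘ (A ⊗ σ) ∘ (ψ ⊗ V) ∘ (V ⊗ σ)`. -/
def Cocycle (A V : C) (mu : A ⊗ A ⟶ A) (psi : V ⊗ A ⟶ A ⊗ V)
    (sig : V ⊗ V ⟶ A ⊗ V) : Prop :=
  (sig ▷ V) ≫ phi A mu sig =
    (α_ V V V).hom ≫ (V ◁ sig) ≫ (α_ V A V).inv ≫ (psi ▷ V) ≫ phi A mu sig

/-- The weak crossed product multiplication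
`μ_{A⊗V} = (μ_A ⊗ V) ∘ (μ_A ⊗ σ) ∘ (A ⊗ ψ ⊗ V)`. -/
def prodAV (A V : C) (mu : A ⊗ A ⟶ A) (psi : V ⊗ A ⟶ A ⊗ V)
    (sig : V ⊗ V ⟶ A ⊗ V) : (A ⊗ V) ⊗ (A ⊗ V) ⟶ A ⊗ V :=
  (α_ A V (A ⊗ V)).hom ≫ (A ◁ ((α_ V A V).inv ≫ (psi ▷ V) ≫ (α_ A V V).hom)) ≫
    (α_ A A (V ⊗ V)).inv ≫ (mu ⊗ₘ sig) ≫ (α_ A A V).inv ≫ (mu ▷ V)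

/-- The morphism `η_A ⊗ V : V ⟶ A ⊗ V`. -/
def etaT (A V : C) (eta : 𝟙_ C ⟶ A) : V ⟶ A ⊗ V := (λ_ V).inv ≫ (eta ▷ V)

/-- The morphism `β_ν = (μ_A ⊗ V) ∘ (A ⊗ ν) : A ⟶ A ⊗ V`. -/
def beta (A V : C) (mu : A ⊗ A ⟶ A) (nu : 𝟙_ C ⟶ A ⊗ V) : A ⟶ A ⊗ V :=
  (ρ_ A).inv ≫ (A ◁ nu) ≫ (α_ A A V).inv ≫ (mu ▷ V)

/-- Preunit condition (pre1):
`(μ_A ⊗ V) ∘ (A ⊗ σ) ∘ (ψ ⊗ V) ∘ (V ⊗ ν) = ∇_{A⊗V} ∘ (η_A ⊗ V)`. -/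
def Pre1 (A V : C) (eta : 𝟙_ C ⟶ A) (mu : A ⊗ A ⟶ A) (psi : V ⊗ A ⟶ A ⊗ V)
    (sig : V ⊗ V ⟶ A ⊗ V) (nu : 𝟙_ C ⟶ A ⊗ V) : Prop :=
  (ρ_ V).inv ≫ (V ◁ nu) ≫ (α_ V A V).inv ≫ (psi ▷ V) ≫ phi A mu sig =
    etaT A V eta ≫ nabla A V eta mu psi

/-- Preunit condition (pre2):
`(μ_A ⊗ V) ∘ (A ⊗ σ) ∘ (ν ⊗ V) = ∇_{A⊗V} ∘ (η_A ⊗ V)`. -/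
def Pre2 (A V : C) (eta : 𝟙_ C ⟶ A) (mu : A ⊗ A ⟶ A) (psi : V ⊗ A ⟶ A ⊗ V)
    (sig : V ⊗ V ⟶ A ⊗ V) (nu : 𝟙_ C ⟶ A ⊗ V) : Prop :=
  (λ_ V).inv ≫ (nu ▷ V) ≫ phi A mu sig = etaT A V eta ≫ nabla A V eta mu psi

/-- Preunit condition (pre3): `(μ_A ⊗ V) ∘ (A ⊗ ψ) ∘ (ν ⊗ A) = β_ν`. -/
def Pre3 (A V : C) (mu : A ⊗ A ⟶ A) (psi : V ⊗ A ⟶ A ⊗ V)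
    (nu : 𝟙_ C ⟶ A ⊗ V) : Prop :=
  (λ_ A).inv ≫ (nu ▷ A) ≫ phi A mu psi = beta A V mu nu

/-- `(A ⊗ V, μ_{A⊗V})` is a weak crossed product: measuring, twisted and cocycle
conditions hold and `∇_{A⊗V} ∘ σ = σ`. -/
def WCP (A V : C) (eta : 𝟙_ C ⟶ A) (mu : A ⊗ A ⟶ A) (psi : V ⊗ A ⟶ A ⊗ V)
    (sig : V ⊗ V ⟶ A ⊗ V) : Prop :=
  Measuring A V mu psi ∧ Twisted A V mu psi sig ∧ Cocycle A V mu psi sig ∧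
    sig ≫ nabla A V eta mu psi = sig

/-- `(A ⊗ V, μ_{A⊗V})` is a weak crossed product with preunit `ν`. -/
def WCPpre (A V : C) (eta : 𝟙_ C ⟶ A) (mu : A ⊗ A ⟶ A) (psi : V ⊗ A ⟶ A ⊗ V)
    (sig : V ⊗ V ⟶ A ⊗ V) (nu : 𝟙_ C ⟶ A ⊗ V) : Prop :=
  WCP A V eta mu psi sig ∧ Pre1 A V eta mu psi sig nu ∧
    Pre2 A V eta mu psi sig nu ∧ Pre3 A V mu psi nu

/-- `(μ_A ⊗ Y) ∘ (A ⊗ γ) : A ⊗ X ⟶ A ⊗ Y` for `γ : X ⟶ A ⊗ Y`. -/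
def tmap (A : C) {X Y : C} (mu : A ⊗ A ⟶ A) (g : X ⟶ A ⊗ Y) : A ⊗ X ⟶ A ⊗ Y :=
  (A ◁ g) ≫ (α_ A A Y).inv ≫ (mu ▷ Y)

/-- Left `A`-linearity of `T : A ⊗ X ⟶ A ⊗ Y`:
`T ∘ (μ_A ⊗ X) = (μ_A ⊗ Y) ∘ (A ⊗ T)`. -/
def LeftLin (A : C) {X Y : C} (mu : A ⊗ A ⟶ A) (T : A ⊗ X ⟶ A ⊗ Y) : Prop :=
  (mu ▷ X) ≫ T = (α_ A A X).hom ≫ (A ◁ T) ≫ (α_ A A Y).inv ≫ (mu ▷ Y)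

/-- `ν` is a preunit for the associative product `m` on `X`. -/
def IsPreunit {X : C} (m : X ⊗ X ⟶ X) (nu : 𝟙_ C ⟶ X) : Prop :=
  (ρ_ X).inv ≫ (X ◁ nu) ≫ m = (λ_ X).inv ≫ (nu ▷ X) ≫ m ∧
  (ρ_ X).inv ≫ (X ◁ nu) ≫ m =
    (ρ_ X).inv ≫ (X ◁ ((λ_ (𝟙_ C)).inv ≫ (nu ⊗ₘ nu) ≫ m)) ≫ m

/-- Brzeziński normalization conditions: `ψ ∘ (η_V ⊗ A) = A ⊗ η_V`,
`ψ ∘ (V ⊗ η_A) = η_A ⊗ V`, `σ ∘ (η_V ⊗ V) = σ ∘ (V ⊗ η_V) = η_A ⊗ V`. -/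
def BrzNorm (A V : C) (eta : 𝟙_ C ⟶ A) (etaV : 𝟙_ C ⟶ V) (psi : V ⊗ A ⟶ A ⊗ V)
    (sig : V ⊗ V ⟶ A ⊗ V) : Prop :=
  (λ_ A).inv ≫ (etaV ▷ A) ≫ psi = (ρ_ A).inv ≫ (A ◁ etaV) ∧
  (ρ_ V).inv ≫ (V ◁ eta) ≫ psi = (λ_ V).inv ≫ (eta ▷ V) ∧
  (λ_ V).inv ≫ (etaV ▷ V) ≫ sig = (λ_ V).inv ≫ (eta ▷ V) ∧
  (ρ_ V).inv ≫ (V ◁ etaV) ≫ sig = (λ_ V).inv ≫ (eta ▷ V)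

section Lemmas

variable {A : C} {mu : A ⊗ A ⟶ A}

theorem tmap_nat {X' X Y : C} (f : X' ⟶ X) (g : X ⟶ A ⊗ Y) :
    (A ◁ f) ≫ tmap A mu g = tmap A mu (f ≫ g) := by
  simp [tmap]

theorem tmap_leftLin (has : (mu ▷ A) ≫ mu = (α_ A A A).hom ≫ (A ◁ mu) ≫ mu)
    {X Y : C} (g : X ⟶ A ⊗ Y) :
    (mu ▷ X) ≫ tmap A mu g =
      (α_ A A X).hom ≫ (A ◁ tmap A mu g) ≫ (α_ A A Y).inv ≫ (mu ▷ Y) := by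
  simp only [tmap, MonoidalCategory.whiskerLeft_comp]
  rw [← whisker_exchange_assoc, associator_inv_naturality_left_assoc,
    ← comp_whiskerRight, has]
  simp only [comp_whiskerRight, Category.assoc]
  monoidal

theorem phi_eq {X Z Y : C} (f : X ⊗ Z ⟶ A ⊗ Y) :
    phi A mu f = (α_ A X Z).hom ≫ tmap A mu f := by
  simp [phi, tmap]

theorem tmap_tmap (has : (mu ▷ A) ≫ mu = (α_ A A A).hom ≫ (A ◁ mu) ≫ mu)
    {X Y Z : C} (g : X ⟶ A ⊗ Y) (h : Y ⟶ A ⊗ Z) :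
    tmap A mu g ≫ tmap A mu h = tmap A mu (g ≫ tmap A mu h) := by
  conv_lhs => rw [tmap]
  slice_lhs 3 4 => rw [tmap_leftLin has]
  simp [tmap]

theorem eta_tmap {eta : 𝟙_ C ⟶ A} (hul : (eta ▷ A) ≫ mu = (λ_ A).hom)
    {X Y : C} (g : X ⟶ A ⊗ Y) :
    (λ_ X).inv ≫ (eta ▷ X) ≫ tmap A mu g = g := by
  simp only [tmap]
  rw [← whisker_exchange_assoc, associator_inv_naturality_left_assoc,
    ← comp_whiskerRight, hul]
  monoidal

theorem nabla_eq {V : C} (eta : 𝟙_ C ⟶ A) (psi : V ⊗ A ⟶ A ⊗ V) :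
    nabla A V eta mu psi = tmap A mu ((ρ_ V).inv ≫ (V ◁ eta) ≫ psi) := by
  have h1 : (ρ_ (A ⊗ V)).inv ≫ ((A ⊗ V) ◁ eta) ≫ (α_ A V A).hom
      = A ◁ ((ρ_ V).inv ≫ (V ◁ eta)) := by monoidal
  rw [nabla, phi_eq, ← Category.assoc, ← Category.assoc, Category.assoc (ρ_ (A ⊗ V)).inv, h1,
    tmap_nat]
  simp

theorem M6 (has : (mu ▷ A) ≫ mu = (α_ A A A).hom ≫ (A ◁ mu) ≫ mu)
    {W Y Z T : C} (F : W ⟶ A ⊗ Y) (H : Y ⊗ Z ⟶ A ⊗ T) :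
    (tmap A mu F ▷ Z) ≫ phi A mu H =
      (α_ A W Z).hom ≫ tmap A mu ((F ▷ Z) ≫ phi A mu H) := by
  simp only [phi_eq]
  conv_lhs => rw [tmap]
  simp only [comp_whiskerRight, Category.assoc]
  rw [associator_naturality_left_assoc, tmap_leftLin has]
  simp only [tmap, MonoidalCategory.whiskerLeft_comp, Category.assoc]
  monoidal
theorem phi_pre {X Z Y X' : C} (k : X ⟶ X') (f : X' ⊗ Z ⟶ A ⊗ Y) :
    phi A mu ((k ▷ Z) ≫ f) = ((A ◁ k) ▷ Z) ≫ phi A mu f := by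
  simp only [phi, MonoidalCategory.whiskerLeft_comp, Category.assoc]
  rw [associator_naturality_middle_assoc]

theorem prodAV_eq {V : C} (has : (mu ▷ A) ≫ mu = (α_ A A A).hom ≫ (A ◁ mu) ≫ mu)
    (psi : V ⊗ A ⟶ A ⊗ V) (sig : V ⊗ V ⟶ A ⊗ V) :
    prodAV A V mu psi sig =
      (α_ A V (A ⊗ V)).hom ≫ tmap A mu ((α_ V A V).inv ≫ (psi ▷ V) ≫ phi A mu sig) := by
  rw [prodAV, MonoidalCategory.tensorHom_def]
  simp only [Category.assoc]
  rw [show (A ◁ sig) ≫ (α_ A A V).inv ≫ (mu ▷ V) = tmap A mu sig from rfl]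
  rw [tmap_leftLin has]
  simp only [phi_eq, tmap, MonoidalCategory.whiskerLeft_comp, Category.assoc]
  monoidal

theorem M5 (has : (mu ▷ A) ≫ mu = (α_ A A A).hom ≫ (A ◁ mu) ≫ mu)
    {P Q S U T : C} (g : P ⊗ Q ⟶ A ⊗ S) (h : S ⊗ U ⟶ A ⊗ T) :
    phi A mu ((α_ P Q U).inv ≫ (g ▷ U) ≫ phi A mu h) =
      (α_ (A ⊗ P) Q U).inv ≫ ((phi A mu g) ▷ U) ≫ phi A mu h := by
  conv_rhs => rw [phi_eq g]
  simp only [comp_whiskerRight, Category.assoc]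
  rw [M6 has]
  simp only [phi_eq, tmap, MonoidalCategory.whiskerLeft_comp, Category.assoc]
  monoidal
theorem phi_pre2 {X Z Z' Y : C} (k : Z ⟶ Z') (f : X ⊗ Z' ⟶ A ⊗ Y) :
    phi A mu ((X ◁ k) ≫ f) = ((A ⊗ X) ◁ k) ≫ phi A mu f := by
  simp only [phi, MonoidalCategory.whiskerLeft_comp, Category.assoc]
  rw [associator_naturality_right_assoc]

variable {V : C} {eta : 𝟙_ C ⟶ A} {psi : V ⊗ A ⟶ A ⊗ V} {sig : V ⊗ V ⟶ A ⊗ V}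

theorem K0 (hul : (eta ▷ A) ≫ mu = (λ_ A).hom)
    (hm : (psi ▷ A) ≫ phi A mu psi = (α_ V A A).hom ≫ (V ◁ mu) ≫ psi) :
    (((ρ_ V).inv ≫ (V ◁ eta) ≫ psi) ▷ A) ≫ phi A mu psi = psi := by
  simp only [comp_whiskerRight, Category.assoc]
  rw [hm, associator_naturality_middle_assoc, ← MonoidalCategory.whiskerLeft_comp_assoc, hul]
  monoidal

theorem K1 (has : (mu ▷ A) ≫ mu = (α_ A A A).hom ≫ (A ◁ mu) ≫ mu)
    (hul : (eta ▷ A) ≫ mu = (λ_ A).hom)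
    (hm : (psi ▷ A) ≫ phi A mu psi = (α_ V A A).hom ≫ (V ◁ mu) ≫ psi) :
    (((ρ_ V).inv ≫ (V ◁ eta) ≫ psi) ▷ (A ⊗ V)) ≫
        phi A mu ((α_ V A V).inv ≫ (psi ▷ V) ≫ phi A mu sig) =
      (α_ V A V).inv ≫ (psi ▷ V) ≫ phi A mu sig := by
  rw [M5 has, associator_inv_naturality_left_assoc, ← comp_whiskerRight_assoc,
    K0 hul hm]

theorem NL (has : (mu ▷ A) ≫ mu = (α_ A A A).hom ≫ (A ◁ mu) ≫ mu)
    (hul : (eta ▷ A) ≫ mu = (λ_ A).hom)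
    (hm : (psi ▷ A) ≫ phi A mu psi = (α_ V A A).hom ≫ (V ◁ mu) ≫ psi) :
    (nabla A V eta mu psi ▷ (A ⊗ V)) ≫ prodAV A V mu psi sig =
      prodAV A V mu psi sig := by
  rw [nabla_eq, prodAV_eq has]
  simp only [← phi_eq]
  rw [M6 has, K1 has hul hm]
  rw [← phi_eq]
theorem M5' (has : (mu ▷ A) ≫ mu = (α_ A A A).hom ≫ (A ◁ mu) ≫ mu)
    {P Q S U T : C} (g : P ⊗ Q ⟶ A ⊗ S) (h : S ⊗ U ⟶ A ⊗ T) :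
    ((phi A mu g) ▷ U) ≫ phi A mu h =
      (α_ (A ⊗ P) Q U).hom ≫ phi A mu ((α_ P Q U).inv ≫ (g ▷ U) ≫ phi A mu h) := by
  rw [M5 has]
  simp

theorem H2 (has : (mu ▷ A) ≫ mu = (α_ A A A).hom ≫ (A ◁ mu) ≫ mu)
    (hm : (psi ▷ A) ≫ phi A mu psi = (α_ V A A).hom ≫ (V ◁ mu) ≫ psi)
    {X Y U : C} (g : X ⟶ A ⊗ Y) (G : V ⊗ Y ⟶ A ⊗ U) :
    (V ◁ tmap A mu g) ≫ (α_ V A Y).inv ≫ (psi ▷ Y) ≫ phi A mu G =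
      (α_ V A X).inv ≫ (psi ▷ X) ≫
        phi A mu ((V ◁ g) ≫ (α_ V A Y).inv ≫ (psi ▷ Y) ≫ phi A mu G) := by
  have hm' : (V ◁ mu) ≫ psi = (α_ V A A).inv ≫ (psi ▷ A) ≫ phi A mu psi := by
    rw [hm]; simp
  rw [phi_pre2]
  conv_lhs => rw [tmap]
  simp only [MonoidalCategory.whiskerLeft_comp, Category.assoc]
  rw [associator_inv_naturality_middle_assoc, ← comp_whiskerRight_assoc, hm']
  simp only [comp_whiskerRight, Category.assoc]
  rw [M5' has]
  rw [← whisker_exchange_assoc]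
  monoidal
theorem K2'' (ht : (sig ▷ A) ≫ phi A mu psi =
      (α_ V V A).hom ≫ (V ◁ psi) ≫ (α_ V A V).inv ≫ (psi ▷ V) ≫ phi A mu sig)
    (hsn : sig ≫ nabla A V eta mu psi = sig) :
    (V ◁ ((ρ_ V).inv ≫ (V ◁ eta) ≫ psi)) ≫ (α_ V A V).inv ≫ (psi ▷ V) ≫ phi A mu sig
      = sig := by
  have ht' : (V ◁ psi) ≫ (α_ V A V).inv ≫ (psi ▷ V) ≫ phi A mu sig =
      (α_ V V A).inv ≫ (sig ▷ A) ≫ phi A mu psi := by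
    rw [ht]; simp
  have hn : ((A ⊗ V) ◁ eta) ≫ phi A mu psi = (ρ_ (A ⊗ V)).hom ≫ nabla A V eta mu psi := by
    rw [nabla]; simp
  simp only [MonoidalCategory.whiskerLeft_comp, Category.assoc]
  rw [ht', associator_inv_naturality_right_assoc, whisker_exchange_assoc, hn]
  rw [MonoidalCategory.whiskerRight_id]
  simp only [Category.assoc, Iso.inv_hom_id_assoc]
  rw [hsn]
  monoidal

theorem K2' (has : (mu ▷ A) ≫ mu = (α_ A A A).hom ≫ (A ◁ mu) ≫ mu)
    (hm : (psi ▷ A) ≫ phi A mu psi = (α_ V A A).hom ≫ (V ◁ mu) ≫ psi)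
    (ht : (sig ▷ A) ≫ phi A mu psi =
      (α_ V V A).hom ≫ (V ◁ psi) ≫ (α_ V A V).inv ≫ (psi ▷ V) ≫ phi A mu sig)
    (hsn : sig ≫ nabla A V eta mu psi = sig) :
    (V ◁ nabla A V eta mu psi) ≫ (α_ V A V).inv ≫ (psi ▷ V) ≫ phi A mu sig =
      (α_ V A V).inv ≫ (psi ▷ V) ≫ phi A mu sig := by
  rw [nabla_eq, H2 has hm, K2'' ht hsn]

theorem NR (has : (mu ▷ A) ≫ mu = (α_ A A A).hom ≫ (A ◁ mu) ≫ mu)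
    (hm : (psi ▷ A) ≫ phi A mu psi = (α_ V A A).hom ≫ (V ◁ mu) ≫ psi)
    (ht : (sig ▷ A) ≫ phi A mu psi =
      (α_ V V A).hom ≫ (V ◁ psi) ≫ (α_ V A V).inv ≫ (psi ▷ V) ≫ phi A mu sig)
    (hsn : sig ≫ nabla A V eta mu psi = sig) :
    ((A ⊗ V) ◁ nabla A V eta mu psi) ≫ prodAV A V mu psi sig = prodAV A V mu psi sig := by
  rw [prodAV_eq has, associator_naturality_right_assoc, tmap_nat,
    K2' has hm ht hsn]

theorem NP (has : (mu ▷ A) ≫ mu = (α_ A A A).hom ≫ (A ◁ mu) ≫ mu)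
    (hsn : sig ≫ nabla A V eta mu psi = sig) :
    prodAV A V mu psi sig ≫ nabla A V eta mu psi = prodAV A V mu psi sig := by
  have hs : sig ≫ tmap A mu ((ρ_ V).inv ≫ (V ◁ eta) ≫ psi) = sig := by
    rw [← nabla_eq, hsn]
  rw [prodAV_eq has, nabla_eq, Category.assoc, tmap_tmap has]
  congr 2
  simp only [phi_eq, Category.assoc]
  rw [tmap_tmap has, hs]
variable {nu : 𝟙_ C ⟶ A ⊗ V}

theorem UR0 (has : (mu ▷ A) ≫ mu = (α_ A A A).hom ≫ (A ◁ mu) ≫ mu)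
    (hul : (eta ▷ A) ≫ mu = (λ_ A).hom)
    (hp1 : (ρ_ V).inv ≫ (V ◁ nu) ≫ (α_ V A V).inv ≫ (psi ▷ V) ≫ phi A mu sig =
      etaT A V eta ≫ nabla A V eta mu psi) :
    (ρ_ (A ⊗ V)).inv ≫ ((A ⊗ V) ◁ nu) ≫ prodAV A V mu psi sig =
      nabla A V eta mu psi := by
  have harg : (ρ_ V).inv ≫ (V ◁ nu) ≫ (α_ V A V).inv ≫ (psi ▷ V) ≫ phi A mu sig =
      (ρ_ V).inv ≫ (V ◁ eta) ≫ psi := by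
    rw [hp1, etaT, nabla_eq, Category.assoc, eta_tmap hul]
  have h1 : (ρ_ (A ⊗ V)).inv ≫ ((A ⊗ V) ◁ nu) ≫ (α_ A V (A ⊗ V)).hom =
      A ◁ ((ρ_ V).inv ≫ (V ◁ nu)) := by monoidal
  rw [prodAV_eq has, ← Category.assoc, ← Category.assoc, Category.assoc (ρ_ (A ⊗ V)).inv,
    h1, tmap_nat, nabla_eq]
  congr 1
  simp only [Category.assoc]
  exact harg

theorem UL0 (has : (mu ▷ A) ≫ mu = (α_ A A A).hom ≫ (A ◁ mu) ≫ mu)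
    (hul : (eta ▷ A) ≫ mu = (λ_ A).hom)
    (hp2 : (λ_ V).inv ≫ (nu ▷ V) ≫ phi A mu sig = etaT A V eta ≫ nabla A V eta mu psi)
    (hp3 : (λ_ A).inv ≫ (nu ▷ A) ≫ phi A mu psi = beta A V mu nu) :
    (λ_ (A ⊗ V)).inv ≫ (nu ▷ (A ⊗ V)) ≫ prodAV A V mu psi sig =
      nabla A V eta mu psi := by
  have hp2' : (nu ▷ V) ≫ phi A mu sig =
      (λ_ V).hom ≫ ((ρ_ V).inv ≫ (V ◁ eta) ≫ psi) := by
    have h := hp2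
    rw [etaT, nabla_eq, Category.assoc, eta_tmap hul] at h
    rw [← h]; simp
  have hp3' : (nu ▷ A) ≫ phi A mu psi = (λ_ A).hom ≫ (ρ_ A).inv ≫ tmap A mu nu := by
    have h := hp3
    rw [show beta A V mu nu = (ρ_ A).inv ≫ tmap A mu nu from rfl] at h
    rw [← h]; simp
  rw [prodAV_eq has]
  simp only [← phi_eq]
  rw [M5 has, associator_inv_naturality_left_assoc, ← comp_whiskerRight_assoc, hp3']
  simp only [comp_whiskerRight, Category.assoc]
  rw [M6 has, hp2', ← tmap_nat, nabla_eq]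
  monoidal
theorem CORE (has : (mu ▷ A) ≫ mu = (α_ A A A).hom ≫ (A ◁ mu) ≫ mu)
    (hm : (psi ▷ A) ≫ phi A mu psi = (α_ V A A).hom ≫ (V ◁ mu) ≫ psi)
    (ht : (sig ▷ A) ≫ phi A mu psi =
      (α_ V V A).hom ≫ (V ◁ psi) ≫ (α_ V A V).inv ≫ (psi ▷ V) ≫ phi A mu sig)
    (hc : (sig ▷ V) ≫ phi A mu sig =
      (α_ V V V).hom ≫ (V ◁ sig) ≫ (α_ V A V).inv ≫ (psi ▷ V) ≫ phi A mu sig) :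
    (((α_ V A V).inv ≫ (psi ▷ V) ≫ phi A mu sig) ▷ (A ⊗ V)) ≫
        phi A mu ((α_ V A V).inv ≫ (psi ▷ V) ≫ phi A mu sig) =
      (α_ V (A ⊗ V) (A ⊗ V)).hom ≫ (V ◁ prodAV A V mu psi sig) ≫
        (α_ V A V).inv ≫ (psi ▷ V) ≫ phi A mu sig := by
  have hc' : (V ◁ sig) ≫ (α_ V A V).inv ≫ (psi ▷ V) ≫ phi A mu sig =
      (α_ V V V).inv ≫ (sig ▷ V) ≫ phi A mu sig := by rw [hc]; simp
  have ht' : (α_ V V A).inv ≫ (sig ▷ A) ≫ phi A mu psi =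
      (V ◁ psi) ≫ (α_ V A V).inv ≫ (psi ▷ V) ≫ phi A mu sig := by rw [ht]; simp
  have haveA : (V ◁ phi A mu sig) ≫ (α_ V A V).inv ≫ (psi ▷ V) ≫ phi A mu sig
      = (V ◁ (α_ A V V).hom) ≫ (α_ V A (V ⊗ V)).inv ≫ (psi ▷ (V ⊗ V)) ≫
          phi A mu ((α_ V V V).inv ≫ (sig ▷ V) ≫ phi A mu sig) := by
    conv_lhs => enter [1]; rw [phi_eq]
    conv_lhs => rw [MonoidalCategory.whiskerLeft_comp, Category.assoc,
      H2 has hm sig sig]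
    rw [hc']
  have haveC : (phi A mu sig ▷ A) ≫ phi A mu psi = (α_ (A ⊗ V) V A).hom ≫
      phi A mu ((V ◁ psi) ≫ (α_ V A V).inv ≫ (psi ▷ V) ≫ phi A mu sig) := by
    rw [M5' has sig psi, ht']
  have haveD : (phi A mu sig ▷ V) ≫ phi A mu sig = (α_ (A ⊗ V) V V).hom ≫
      phi A mu ((α_ V V V).inv ≫ (sig ▷ V) ≫ phi A mu sig) := M5' has sig sig
  have haveC2 : (((α_ V A V).inv ≫ (psi ▷ V) ≫ phi A mu sig) ▷ A) ≫ phi A mu psi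
      = ((α_ V A V).inv ▷ A) ≫ ((psi ▷ V) ▷ A) ≫ (α_ (A ⊗ V) V A).hom ≫
          phi A mu ((V ◁ psi) ≫ (α_ V A V).inv ≫ (psi ▷ V) ≫ phi A mu sig) := by
    simp only [comp_whiskerRight, Category.assoc]; rw [haveC]
  have haveD2 : (((V ◁ psi) ≫ (α_ V A V).inv ≫ (psi ▷ V) ≫ phi A mu sig) ▷ V) ≫
        phi A mu sig
      = ((V ◁ psi) ▷ V) ≫ ((α_ V A V).inv ▷ V) ≫ ((psi ▷ V) ▷ V) ≫
          (α_ (A ⊗ V) V V).hom ≫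
          phi A mu ((α_ V V V).inv ≫ (sig ▷ V) ≫ phi A mu sig) := by
    simp only [comp_whiskerRight, Category.assoc]; rw [haveD]
  -- right-hand side
  conv_rhs => rw [prodAV_eq has, MonoidalCategory.whiskerLeft_comp, Category.assoc,
    H2 has hm _ sig]
  conv_rhs => rw [MonoidalCategory.whiskerLeft_comp, MonoidalCategory.whiskerLeft_comp,
    Category.assoc, Category.assoc, haveA]
  -- left-hand side
  conv_lhs => rw [M5 has psi sig, associator_inv_naturality_left_assoc]
  conv_lhs => rw [← comp_whiskerRight_assoc]
  conv_lhs => rw [haveC2]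
  simp only [comp_whiskerRight, Category.assoc]
  conv_lhs => rw [M5' has ((V ◁ psi) ≫ (α_ V A V).inv ≫ (psi ▷ V) ≫ phi A mu sig) sig]
  conv_lhs => rw [haveD2]
  simp only [phi, MonoidalCategory.whiskerLeft_comp, comp_whiskerRight, Category.assoc]
  monoidal
theorem ASSOC_AV (has : (mu ▷ A) ≫ mu = (α_ A A A).hom ≫ (A ◁ mu) ≫ mu)
    (hm : (psi ▷ A) ≫ phi A mu psi = (α_ V A A).hom ≫ (V ◁ mu) ≫ psi)
    (ht : (sig ▷ A) ≫ phi A mu psi =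
      (α_ V V A).hom ≫ (V ◁ psi) ≫ (α_ V A V).inv ≫ (psi ▷ V) ≫ phi A mu sig)
    (hc : (sig ▷ V) ≫ phi A mu sig =
      (α_ V V V).hom ≫ (V ◁ sig) ≫ (α_ V A V).inv ≫ (psi ▷ V) ≫ phi A mu sig) :
    (prodAV A V mu psi sig ▷ (A ⊗ V)) ≫ prodAV A V mu psi sig =
      (α_ (A ⊗ V) (A ⊗ V) (A ⊗ V)).hom ≫ ((A ⊗ V) ◁ prodAV A V mu psi sig) ≫
        prodAV A V mu psi sig := by
  conv_rhs => rw [prodAV_eq has, MonoidalCategory.whiskerLeft_comp, Category.assoc,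
    associator_naturality_right_assoc, tmap_nat]
  conv_lhs => rw [prodAV_eq has, comp_whiskerRight, Category.assoc, ← phi_eq]
  conv_lhs => rw [M6 has, CORE has hm ht hc]
  conv_lhs => rw [prodAV_eq has, MonoidalCategory.whiskerLeft_comp]
  conv_lhs => rw [← tmap_nat, ← tmap_nat]
  conv_rhs => rw [← tmap_nat]
  monoidal
end Lemmas

/-- if `(A⊗V, μ_{A⊗V})` is a weak crossed product with preunit `ν`,
then `A × V` is a monoid with product `p ∘ μ_{A⊗V} ∘ (i ⊗ₘ i)` and unit `p ∘ ν`. -/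
theorem image_is_monoid (A V : C) (eta : 𝟙_ C ⟶ A) (mu : A ⊗ A ⟶ A)
    (hA : IsMon A eta mu) (psi : V ⊗ A ⟶ A ⊗ V) (sig : V ⊗ V ⟶ A ⊗ V)
    (nu : 𝟙_ C ⟶ A ⊗ V) (h : WCPpre A V eta mu psi sig nu)
    (P : C) (p : A ⊗ V ⟶ P) (i : P ⟶ A ⊗ V)
    (hpi : p ≫ i = nabla A V eta mu psi) (hip : i ≫ p = 𝟙 P) :
    IsMon P (nu ≫ p) ((i ⊗ₘ i) ≫ prodAV A V mu psi sig ≫ p) := by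
  obtain ⟨⟨hm, ht, hc, hsn⟩, hp1, hp2, hp3⟩ := h
  obtain ⟨hul, hur, has⟩ := hA
  have hm' : (psi ▷ A) ≫ phi A mu psi = (α_ V A A).hom ≫ (V ◁ mu) ≫ psi := hm
  have ht' : (sig ▷ A) ≫ phi A mu psi =
      (α_ V V A).hom ≫ (V ◁ psi) ≫ (α_ V A V).inv ≫ (psi ▷ V) ≫ phi A mu sig := ht
  have hc' : (sig ▷ V) ≫ phi A mu sig =
      (α_ V V V).hom ≫ (V ◁ sig) ≫ (α_ V A V).inv ≫ (psi ▷ V) ≫ phi A mu sig := hc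
  have hiNp : i ≫ nabla A V eta mu psi ≫ p = 𝟙 P := by
    rw [← hpi, ← Category.assoc, ← Category.assoc, hip, Category.id_comp, hip]
  have hnuL : (nu ▷ (A ⊗ V)) ≫ prodAV A V mu psi sig ≫ p =
      (λ_ (A ⊗ V)).hom ≫ nabla A V eta mu psi ≫ p := by
    rw [← Category.assoc, ← UL0 has hul hp2 hp3]; simp
  have hnuR : ((A ⊗ V) ◁ nu) ≫ prodAV A V mu psi sig ≫ p =
      (ρ_ (A ⊗ V)).hom ≫ nabla A V eta mu psi ≫ p := by
    rw [← Category.assoc, ← UR0 has hul hp1]; simp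
  have hNL : (nabla A V eta mu psi ▷ (A ⊗ V)) ≫ prodAV A V mu psi sig ≫ p =
      prodAV A V mu psi sig ≫ p := by
    rw [← Category.assoc, NL has hul hm']
  have hNR : ((A ⊗ V) ◁ nabla A V eta mu psi) ≫ prodAV A V mu psi sig ≫ p =
      prodAV A V mu psi sig ≫ p := by
    rw [← Category.assoc, NR has hm' ht' hsn]
  refine ⟨?_, ?_, ?_⟩
  · -- left unit
    rw [MonoidalCategory.tensorHom_def i i]
    have e1 : ((nu ≫ p) ▷ P) ≫ (i ▷ P) = ((nu ≫ nabla A V eta mu psi) ▷ P) := by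
      rw [← comp_whiskerRight, Category.assoc, hpi]
    simp only [Category.assoc]
    rw [← Category.assoc, e1, comp_whiskerRight, Category.assoc,
      ← whisker_exchange_assoc, hNL, ← whisker_exchange_assoc, hnuL]
    rw [leftUnitor_naturality_assoc, hiNp, Category.comp_id]
  · -- right unit
    rw [MonoidalCategory.tensorHom_def' i i]
    have e1 : (P ◁ (nu ≫ p)) ≫ (P ◁ i) = P ◁ (nu ≫ nabla A V eta mu psi) := by
      rw [← MonoidalCategory.whiskerLeft_comp, Category.assoc, hpi]
    simp only [Category.assoc]
    rw [← Category.assoc, e1, whisker_exchange_assoc, MonoidalCategory.whiskerLeft_comp,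
      Category.assoc, hNR, hnuR]
    rw [rightUnitor_naturality_assoc, hiNp, Category.comp_id]
  · -- associativity
    have eL1 : (p ▷ P) ≫ (i ⊗ₘ i) ≫ prodAV A V mu psi sig ≫ p =
        ((A ⊗ V) ◁ i) ≫ prodAV A V mu psi sig ≫ p := by
      rw [MonoidalCategory.tensorHom_def i i]
      simp only [Category.assoc]
      rw [← comp_whiskerRight_assoc, hpi, ← whisker_exchange_assoc, hNL]
    have eR1 : P ◁ ((i ⊗ₘ i) ≫ prodAV A V mu psi sig ≫ p) ≫ (i ⊗ₘ i) ≫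
          prodAV A V mu psi sig ≫ p =
        (i ▷ (P ⊗ P)) ≫ ((A ⊗ V) ◁ ((i ⊗ₘ i) ≫ prodAV A V mu psi sig)) ≫
          prodAV A V mu psi sig ≫ p := by
      conv_lhs => enter [2, 1]; rw [MonoidalCategory.tensorHom_def' i i]
      simp only [Category.assoc]
      rw [← MonoidalCategory.whiskerLeft_comp_assoc]
      simp only [Category.assoc]
      rw [hpi, NP has hsn, whisker_exchange_assoc]
    have hASSOC : (prodAV A V mu psi sig ▷ (A ⊗ V)) ≫ prodAV A V mu psi sig ≫ p =
        (α_ (A ⊗ V) (A ⊗ V) (A ⊗ V)).hom ≫ ((A ⊗ V) ◁ prodAV A V mu psi sig) ≫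
          prodAV A V mu psi sig ≫ p := by
      rw [← Category.assoc, ASSOC_AV has hm' ht' hc']
      simp only [Category.assoc]
    simp only [comp_whiskerRight, Category.assoc]
    rw [eL1, ← whisker_exchange_assoc, hASSOC, eR1]
    slice_lhs 1 2 => rw [← MonoidalCategory.tensorHom_def]
    simp only [Category.assoc]
    rw [associator_naturality_assoc i i i, MonoidalCategory.tensorHom_def]
    simp only [MonoidalCategory.whiskerLeft_comp, Category.assoc]
end WeakCrossed
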